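/- arXiv:2411.11290 — 4 statements merged into one kernel-verified Lean document; each statement's English description precedes it below -/
import Mathlib

section
/- Let f be an entire function and α a root of f of multiplicity k ≥ 1, so that f(z) = (z-α)^k g(z) with g analytic and g(α) ≠ 0. Then α is a fixed point of the Chebyshev map C_f with multiplier C_f'(α) = 1 - (1/(2k))·(3 - 1/k). In particular, if k = 1 then α is a superattracting fixed point (multiplier 0), and for all k ≥ 1 the multiplier has absolute value less than 1. -/
/-- The Chebyshev's method iteration map applied to an entire function `f`. -/
noncomputable def chebyshev (f : ℂ → ℂ) (z : ℂ) : ℂ :=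
  z - (1 + (1/2) * (f z * deriv (deriv f) z) / (deriv f z)^2) * (f z / deriv f z)

lemma cheb_alg (z α gz hz h'z : ℂ) (n : ℕ) (hu : z - α ≠ 0) (hh : hz ≠ 0) :
    z - (1 + (1/2) * (((z-α)^(n+1+1) * gz) *
        (((n:ℂ)+1) * (z-α)^n * hz + (z-α)^(n+1) * h'z)) / ((z-α)^(n+1) * hz)^2) *
      (((z-α)^(n+1+1) * gz) / ((z-α)^(n+1) * hz))
    = z - (z-α) * ((1 + (1/2) * (gz * (((n:ℂ)+1) * hz + (z-α) * h'z)) / hz^2) *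
      (gz / hz)) := by
  have hun : (z - α) ^ (n + 1) ≠ 0 := pow_ne_zero _ hu
  field_simp
  ring

/-- If `α` is a root of the entire function `f` of multiplicity `k ≥ 1`, i.e.
`f z = (z-α)^k * g z` with `g` entire and `g α ≠ 0`, then `α` is a fixed point of the
Chebyshev map `C_f` with multiplier `1 - (1/(2k))·(3 - 1/k)`; in particular, for
`k = 1` it is superattracting, and for all `k ≥ 1` the multiplier has modulus `< 1`. -/
theorem chebyshev_multiplier_at_root (f g : ℂ → ℂ) (α : ℂ) (k : ℕ) (hk : 1 ≤ k)
    (hg : Differentiable ℂ g) (hgα : g α ≠ 0)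
    (hf : ∀ z, f z = (z - α)^k * g z) :
    chebyshev f α = α ∧
    deriv (chebyshev f) α = 1 - (1/(2*(k:ℂ))) * (3 - 1/(k:ℂ)) ∧
    (k = 1 → deriv (chebyshev f) α = 0) ∧
    ‖deriv (chebyshev f) α‖ < 1 := by
  obtain ⟨m, rfl⟩ : ∃ m, k = m + 1 := ⟨k - 1, (Nat.succ_pred_eq_of_pos hk).symm⟩
  have hfe : f = fun z => (z - α) ^ (m + 1) * g z := funext hf
  subst hfe
  -- analyticity facts
  have hgA : AnalyticOnNhd ℂ g Set.univ := fun y _ => hg.analyticAt y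
  have hgd : Differentiable ℂ (deriv g) := fun x => (hgA.deriv x trivial).differentiableAt
  set h : ℂ → ℂ := fun z => ((m : ℂ) + 1) * g z + (z - α) * deriv g z with hh_def
  have hh : Differentiable ℂ h :=
    ((differentiable_const _).mul hg).add ((differentiable_id.sub_const α).mul hgd)
  have hhA : AnalyticOnNhd ℂ h Set.univ := fun y _ => hh.analyticAt y
  have hhd : Differentiable ℂ (deriv h) := fun x => (hhA.deriv x trivial).differentiableAt
  have hhα : h α = ((m : ℂ) + 1) * g α := by simp [hh_def]
  have hm1 : ((m : ℂ) + 1) ≠ 0 := Nat.cast_add_one_ne_zero m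
  have hhα0 : h α ≠ 0 := by rw [hhα]; exact mul_ne_zero hm1 hgα
  -- first derivative of f
  have hd1 : ∀ z, HasDerivAt (fun z => (z - α) ^ (m + 1) * g z) ((z - α) ^ m * h z) z := by
    intro z
    have := (((hasDerivAt_id z).sub_const α).pow (m + 1)).mul (hg z).hasDerivAt
    refine this.congr_deriv ?_
    simp only [hh_def, Nat.add_sub_cancel, id_eq, mul_one, Pi.pow_apply]
    push_cast
    ring
  have hdf : deriv (fun z => (z - α) ^ (m + 1) * g z) = fun z => (z - α) ^ m * h z :=
    funext fun z => (hd1 z).deriv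
  -- second derivative
  have hd2 : ∀ z, HasDerivAt (fun z => (z - α) ^ m * h z)
      ((m : ℂ) * (z - α) ^ (m - 1) * h z + (z - α) ^ m * deriv h z) z := by
    intro z
    have := (((hasDerivAt_id z).sub_const α).pow m).mul (hh z).hasDerivAt
    refine this.congr_deriv ?_
    simp only [id_eq, mul_one, Pi.pow_apply]
  have hdf2' : deriv (fun z => (z - α) ^ m * h z)
      = fun z => (m : ℂ) * (z - α) ^ (m - 1) * h z + (z - α) ^ m * deriv h z :=
    funext fun z => (hd2 z).deriv
  have hdf2 : deriv (deriv (fun z => (z - α) ^ (m + 1) * g z))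
      = fun z => (m : ℂ) * (z - α) ^ (m - 1) * h z + (z - α) ^ m * deriv h z := by
    rw [hdf, hdf2']
  -- fixed point
  have hfix : chebyshev (fun z => (z - α) ^ (m + 1) * g z) α = α := by
    simp [chebyshev]
  -- the regularized map
  set G : ℂ → ℂ := fun z =>
    (1 + (1/2) * (g z * ((m : ℂ) * h z + (z - α) * deriv h z)) / (h z) ^ 2) * (g z / h z)
    with hG_def
  set F : ℂ → ℂ := fun z => z - (z - α) * G z with hF_def
  -- eventual equality near α
  have hev : chebyshev (fun z => (z - α) ^ (m + 1) * g z) =ᶠ[nhds α] F := by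
    have hopen : {z : ℂ | h z ≠ 0} ∈ nhds α :=
      (isOpen_compl_singleton.preimage hh.continuous).mem_nhds hhα0
    filter_upwards [hopen] with z hz
    rcases eq_or_ne z α with rfl | hzα
    · simp [hfix, hF_def]
    · have hu : z - α ≠ 0 := sub_ne_zero.mpr hzα
      simp only [chebyshev, hdf, hdf2', hF_def, hG_def]
      rcases m with _ | n
      · simp only [Nat.cast_zero, pow_zero, one_mul, zero_mul, Nat.zero_sub, zero_add,
          pow_one]
        field_simp [hu, hz]
      · simp only [Nat.cast_add, Nat.cast_one, Nat.add_sub_cancel]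
        exact cheb_alg z α (g z) (h z) (deriv h z) n hu hz
  -- derivative of F at α
  have hGα : DifferentiableAt ℂ G α := by
    apply DifferentiableAt.mul
    · apply DifferentiableAt.add (differentiableAt_const _)
      apply DifferentiableAt.div
      · exact (differentiableAt_const _).mul
          ((hg α).mul (((differentiableAt_const _).mul (hh α)).add
            ((differentiableAt_id.sub_const α).mul (hhd α))))
      · exact (hh α).pow 2
      · exact pow_ne_zero 2 hhα0
    · exact (hg α).div (hh α) hhα0
  have hFd : HasDerivAt F (1 - G α) α := by
    have h1 : HasDerivAt (fun z : ℂ => (z - α) * G z) (1 * G α + (α - α) * deriv G α) α :=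
      ((hasDerivAt_id α).sub_const α).mul hGα.hasDerivAt
    have h2 := (hasDerivAt_id α).sub h1
    exact h2.congr_deriv (by simp)
  have hGαval : G α = (1 + (1/2) * (g α * ((m : ℂ) * h α)) / (h α) ^ 2) * (g α / h α) := by
    simp [hG_def]
  have hderiv : deriv (chebyshev (fun z => (z - α) ^ (m + 1) * g z)) α
      = 1 - (1/(2*((m:ℕ)+1:ℂ))) * (3 - 1/((m:ℕ)+1:ℂ)) := by
    rw [hev.deriv_eq, hFd.deriv, hGαval, hhα]
    have : (((m:ℕ)+1 : ℕ) : ℂ) = (m : ℂ) + 1 := by push_cast; ring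
    field_simp
    ring
  refine ⟨hfix, ?_, ?_, ?_⟩
  · rw [hderiv]; push_cast; ring
  · intro hk1
    have : m = 0 := by omega
    subst this
    rw [hderiv]; norm_num
  · rw [hderiv]
    have hcast : (1 : ℂ) - (1/(2*((m:ℕ)+1:ℂ))) * (3 - 1/((m:ℕ)+1:ℂ))
        = (((1 : ℝ) - (1/(2*((m:ℝ)+1))) * (3 - 1/((m:ℝ)+1)) : ℝ) : ℂ) := by
      push_cast; norm_num
    rw [hcast, Complex.norm_real, Real.norm_eq_abs]
    rw [abs_lt]
    have ht : (0:ℝ) < (m:ℝ) + 1 := by positivity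
    have hkey : (1/(2*((m:ℝ)+1))) * (3 - 1/((m:ℝ)+1))
        = (3*((m:ℝ)+1) - 1) / (2*((m:ℝ)+1)^2) := by
      field_simp
      try exact Or.inl trivial
    rw [hkey]
    constructor
    · have : (3*((m:ℝ)+1) - 1) / (2*((m:ℝ)+1)^2) < 2 := by
        rw [div_lt_iff₀ (by positivity)]
        nlinarith
      linarith
    · have : (0:ℝ) < (3*((m:ℝ)+1) - 1) / (2*((m:ℝ)+1)^2) := by
        apply div_pos (by nlinarith) (by positivity)
      linarith
end

section
/- Let f(z) = e^{z^n} for n ≥ 2. Then the Chebyshev map of f is C_f(z) = (2n²z^{2n} - 3nz^n - n + 1)/(2n²z^{2n-1}), every extraneous fixed point of C_f satisfies z^n = (1-n)/(3n), and the multiplier of each such fixed point equals 1 + 9n/(2(n-1)); in particular all extraneous fixed points are repelling. -/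
private lemma cheb_aux (z E X S T R : ℂ) (hE : E ≠ 0) (hS : S = E * T)
    (h : z - (1 + (1/2) * T / X^2) * (1 / X) = R) :
    z - (1 + (1/2) * (E * S) / (E * X)^2) * (E / (E * X)) = R := by
  have h1 : (1/2 : ℂ) * (E * S) / (E * X)^2 = (1/2) * T / X^2 := by
    rw [hS, mul_pow, show (1/2:ℂ) * (E * (E * T)) = E^2 * ((1/2)*T) by ring]
    exact mul_div_mul_left _ _ (pow_ne_zero 2 hE)
  have h2 : E / (E * X) = 1 / X := by
    have := mul_div_mul_left 1 X hE
    rwa [mul_one] at this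
  rw [h1, h2, h]


/-- For `f(z) = e^{z^n}` with `n ≥ 2`: the Chebyshev map is
`C_f(z) = (2n²z^{2n} - 3nz^n - n + 1)/(2n²z^{2n-1})`, every (extraneous) fixed point
satisfies `z^n = (1-n)/(3n)`, and each such fixed point has multiplier
`1 + 9n/(2(n-1))`; in particular all extraneous fixed points are repelling. -/
theorem chebyshev_exp_pow (n : ℕ) (hn : 2 ≤ n)
    (C : ℂ → ℂ) (hC : C = chebyshev (fun w => Complex.exp (w^n))) :
    (∀ z : ℂ, z ≠ 0 →
      C z = (2*(n:ℂ)^2*z^(2*n) - 3*(n:ℂ)*z^n - (n:ℂ) + 1) / (2*(n:ℂ)^2*z^(2*n-1))) ∧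
    (∀ z : ℂ, z ≠ 0 → C z = z →
      z^n = (1 - (n:ℂ)) / (3*(n:ℂ)) ∧
      deriv C z = 1 + 9*(n:ℂ) / (2*((n:ℂ) - 1)) ∧
      1 < ‖deriv C z‖) := by
  obtain ⟨m, rfl⟩ : ∃ m, n = m + 2 := ⟨n - 2, by omega⟩
  have hkC : ((m+2:ℕ):ℂ) ≠ 0 := Nat.cast_ne_zero.mpr (by omega)
  have hm1C : ((m:ℂ)+1) ≠ 0 := by
    have : ((m+1:ℕ):ℂ) ≠ 0 := Nat.cast_ne_zero.mpr (by omega)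
    push_cast at this; exact this
  -- first derivative of f
  have hf1 : deriv (fun w : ℂ => Complex.exp (w^(m+2))) =
      fun z => Complex.exp (z^(m+2)) * (((m+2:ℕ):ℂ) * z^(m+1)) := by
    funext z
    have h := ((hasDerivAt_pow (m+2) z).cexp)
    have hk1 : m + 2 - 1 = m + 1 := by omega
    rw [hk1] at h
    exact h.deriv
  -- second derivative value
  have hf2 : ∀ z : ℂ, deriv (deriv (fun w : ℂ => Complex.exp (w^(m+2)))) z =
      Complex.exp (z^(m+2)) * (((m+2:ℕ):ℂ) * z^(m+1)) * (((m+2:ℕ):ℂ) * z^(m+1))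
        + Complex.exp (z^(m+2)) * (((m+2:ℕ):ℂ) * (((m+1:ℕ):ℂ) * z^m)) := by
    intro z
    rw [hf1]
    have h1 : HasDerivAt (fun z : ℂ => Complex.exp (z^(m+2)))
        (Complex.exp (z^(m+2)) * (((m+2:ℕ):ℂ) * z^(m+1))) z := by
      have h := ((hasDerivAt_pow (m+2) z).cexp)
      have hk1 : m + 2 - 1 = m + 1 := by omega
      rwa [hk1] at h
    have h2 : HasDerivAt (fun z : ℂ => ((m+2:ℕ):ℂ) * z^(m+1))
        (((m+2:ℕ):ℂ) * (((m+1:ℕ):ℂ) * z^m)) z := by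
      have h := (hasDerivAt_pow (m+1) z).const_mul ((m+2:ℕ):ℂ)
      have hm' : m + 1 - 1 = m := by omega
      rwa [hm'] at h
    exact (h1.mul h2).deriv
  have h2k : 2 * (m+2) = 2*m+4 := by omega
  have h2k1 : 2 * (m+2) - 1 = 2*m+3 := by omega
  -- Part 1
  have part1 : ∀ z : ℂ, z ≠ 0 →
      C z = (2*((m+2:ℕ):ℂ)^2*z^(2*(m+2)) - 3*((m+2:ℕ):ℂ)*z^(m+2) - ((m+2:ℕ):ℂ) + 1)
        / (2*((m+2:ℕ):ℂ)^2*z^(2*(m+2)-1)) := by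
    intro z hz
    rw [hC]
    unfold chebyshev
    rw [hf2 z]
    simp only [hf1]
    rw [h2k1, h2k]
    have he : Complex.exp (z^(m+2)) ≠ 0 := Complex.exp_ne_zero _
    have hm2C : ((m:ℂ)+2) ≠ 0 := by push_cast at hkC; exact hkC
    refine cheb_aux z (Complex.exp (z^(m+2))) (((m+2:ℕ):ℂ) * z^(m+1)) _
      ((((m+2:ℕ):ℂ) * z^(m+1)) * (((m+2:ℕ):ℂ) * z^(m+1)) + ((m+2:ℕ):ℂ) * (((m+1:ℕ):ℂ) * z^m))
      _ he (by ring) ?_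
    push_cast
    field_simp [hz, hm2C]
    ring
  refine ⟨part1, ?_⟩
  intro z hz hCz
  have h2K2 : (2*((m+2:ℕ):ℂ)^2) ≠ 0 := mul_ne_zero (by norm_num) (pow_ne_zero _ hkC)
  have hden : (2*((m+2:ℕ):ℂ)^2*z^(2*(m+2)-1)) ≠ 0 :=
    mul_ne_zero h2K2 (pow_ne_zero _ hz)
  have heq : 2*((m+2:ℕ):ℂ)^2*z^(2*(m+2)) - 3*((m+2:ℕ):ℂ)*z^(m+2) - ((m+2:ℕ):ℂ) + 1
      = z * (2*((m+2:ℕ):ℂ)^2*z^(2*(m+2)-1)) :=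
    (div_eq_iff hden).mp ((part1 z hz).symm.trans hCz)
  rw [h2k1, h2k] at heq
  have ht : 3*((m:ℂ)+2)*z^(m+2) = 1 - ((m:ℂ)+2) := by
    push_cast at heq
    linear_combination -heq
  have hm2C : ((m:ℂ)+2) ≠ 0 := by push_cast at hkC; exact hkC
  have hzk : z^(m+2) = (1 - ((m+2:ℕ):ℂ)) / (3*((m+2:ℕ):ℂ)) := by
    rw [eq_div_iff (by push_cast; exact mul_ne_zero (by norm_num) hm2C)]
    push_cast
    linear_combination ht
  have hder : deriv C z = 1 + 9*((m+2:ℕ):ℂ) / (2*(((m+2:ℕ):ℂ) - 1)) := by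
    have hev : C =ᶠ[nhds z] fun w =>
        (2*((m+2:ℕ):ℂ)^2*w^(2*m+4) - 3*((m+2:ℕ):ℂ)*w^(m+2) - ((m+2:ℕ):ℂ) + 1)
          / (2*((m+2:ℕ):ℂ)^2*w^(2*m+3)) := by
      filter_upwards [eventually_ne_nhds hz] with w hw
      rw [part1 w hw, h2k1, h2k]
    have hNum : HasDerivAt (fun w : ℂ =>
        2*((m+2:ℕ):ℂ)^2*w^(2*m+4) - 3*((m+2:ℕ):ℂ)*w^(m+2) - ((m+2:ℕ):ℂ) + 1)
        (2*((m+2:ℕ):ℂ)^2*((↑(2*m+4):ℂ)*z^(2*m+3)) - 3*((m+2:ℕ):ℂ)*((↑(m+2):ℂ)*z^(m+1))) z := by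
      have hA := (hasDerivAt_pow (2*m+4) z).const_mul (2*((m+2:ℕ):ℂ)^2)
      have hB := (hasDerivAt_pow (m+2) z).const_mul (3*((m+2:ℕ):ℂ))
      have e1 : 2*m+4-1 = 2*m+3 := by omega
      have e2 : m+2-1 = m+1 := by omega
      rw [e1] at hA; rw [e2] at hB
      exact ((hA.sub hB).sub_const _).add_const _
    have hDen : HasDerivAt (fun w : ℂ => 2*((m+2:ℕ):ℂ)^2*w^(2*m+3))
        (2*((m+2:ℕ):ℂ)^2*((↑(2*m+3):ℂ)*z^(2*m+2))) z := by
      have hA := (hasDerivAt_pow (2*m+3) z).const_mul (2*((m+2:ℕ):ℂ)^2)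
      have e1 : 2*m+3-1 = 2*m+2 := by omega
      rwa [e1] at hA
    have hden' : (2*((m+2:ℕ):ℂ)^2*z^(2*m+3)) ≠ 0 :=
      mul_ne_zero h2K2 (pow_ne_zero _ hz)
    have hdg := (hNum.div hDen hden').deriv
    simp only [Pi.div_def] at hdg
    rw [hev.deriv_eq, hdg]
    have hk1 : (((m+2:ℕ):ℂ) - 1) ≠ 0 := by
      push_cast
      have : ((m:ℂ)+2) - 1 = (m:ℂ)+1 := by ring
      rw [this]; exact hm1C
    rw [div_eq_iff (pow_ne_zero 2 hden')]
    have h2k1ne : (2*(((m+2:ℕ):ℂ) - 1)) ≠ 0 := mul_ne_zero (by norm_num) hk1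
    have hfrac : (1 + 9*((m+2:ℕ):ℂ) / (2*(((m+2:ℕ):ℂ) - 1)))
        = (2*(((m+2:ℕ):ℂ)-1) + 9*((m+2:ℕ):ℂ)) / (2*(((m+2:ℕ):ℂ)-1)) := by
      rw [add_div, div_self h2k1ne]
    have goal' : (2*((m+2:ℕ):ℂ)^2*((↑(2*m+4):ℂ)*z^(2*m+3)) - 3*((m+2:ℕ):ℂ)*((↑(m+2):ℂ)*z^(m+1)))
          * (2*((m+2:ℕ):ℂ)^2*z^(2*m+3))
        - (2*((m+2:ℕ):ℂ)^2*z^(2*m+4) - 3*((m+2:ℕ):ℂ)*z^(m+2) - ((m+2:ℕ):ℂ) + 1)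
          * (2*((m+2:ℕ):ℂ)^2*((↑(2*m+3):ℂ)*z^(2*m+2)))
        = (1 + 9*((m+2:ℕ):ℂ) / (2*(((m+2:ℕ):ℂ) - 1))) * (2*((m+2:ℕ):ℂ)^2*z^(2*m+3))^2 := by
      rw [hfrac, div_mul_eq_mul_div, eq_div_iff h2k1ne]
      push_cast
      linear_combination ((z^(m+1))^2 * (-12*((m:ℂ)+2)^4*z^(m+2)
        + 4*((m:ℂ)+2)^2*(((m:ℂ)+2)-1)*(2*((m:ℂ)+2)-1))) * ht
    exact goal'
  refine ⟨hzk, hder, ?_⟩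
  rw [hder]
  have hcast : (1 + 9*((m+2:ℕ):ℂ) / (2*(((m+2:ℕ):ℂ) - 1)))
      = (((1 + 9*((m:ℝ)+2) / (2*((m:ℝ)+1)) : ℝ)) : ℂ) := by
    push_cast
    ring_nf
  rw [hcast, Complex.norm_real, Real.norm_eq_abs]
  have hpos : 0 < 9*((m:ℝ)+2) / (2*((m:ℝ)+1)) := by positivity
  rw [abs_of_pos (by linarith)]
  linarith
end

section
/- For n ≥ 1 and f(z) = z·e^{z^n}, the Chebyshev's method applied to f is given by the rational function C_n(z) = n·z^{n+1}·(2n²z^{2n} + 3nz^n - n + 1)/(2(nz^n + 1)³). -/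
lemma hd1 (n : ℕ) (z : ℂ) :
    HasDerivAt (fun w : ℂ => w * Complex.exp (w^n))
      (Complex.exp (z^n) + z * (Complex.exp (z^n) * ((n:ℂ) * z^(n-1)))) z := by
  have h1 : HasDerivAt (fun w : ℂ => Complex.exp (w^n))
      (Complex.exp (z^n) * ((n:ℂ) * z^(n-1))) z := (hasDerivAt_pow n z).cexp
  simpa using (hasDerivAt_id' z).fun_mul h1

lemma deriv1 (n : ℕ) (hn : 1 ≤ n) :
    deriv (fun w : ℂ => w * Complex.exp (w^n)) =
      fun z => ((n:ℂ) * z^n + 1) * Complex.exp (z^n) := by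
  funext z
  rw [(hd1 n z).deriv]
  have h : z^n = z^(n-1) * z := by
    conv_lhs => rw [← Nat.succ_pred_eq_of_pos hn]
    rw [pow_succ]; rfl
  rw [h]; ring

lemma hd2 (n : ℕ) (z : ℂ) :
    HasDerivAt (fun w : ℂ => ((n:ℂ) * w^n + 1) * Complex.exp (w^n))
      (((n:ℂ) * ((n:ℂ) * z^(n-1))) * Complex.exp (z^n)
        + ((n:ℂ) * z^n + 1) * (Complex.exp (z^n) * ((n:ℂ) * z^(n-1)))) z := by
  have hp : HasDerivAt (fun w : ℂ => (n:ℂ) * w^n + 1) ((n:ℂ) * ((n:ℂ) * z^(n-1))) z := by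
    simpa using (((hasDerivAt_pow n z).const_mul (n:ℂ)).add_const 1)
  have h1 : HasDerivAt (fun w : ℂ => Complex.exp (w^n))
      (Complex.exp (z^n) * ((n:ℂ) * z^(n-1))) z := (hasDerivAt_pow n z).cexp
  simpa using hp.fun_mul h1

lemma alg (ν z w t t1 t2 E : ℂ) (hE : E ≠ 0) (hA : ν*t+1 ≠ 0)
    (h1 : t = w * z) (h2 : t1 = z * t) (h3 : t2 = t^2) :
    z - (1 + (1/2) * ((z * E) * ((ν * (ν * w)) * E + (ν*t+1) * (E * (ν * w)))) / ((ν*t+1)*E)^2)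
        * ((z * E) / ((ν*t+1)*E)) =
      ν * t1 * (2*ν^2*t2 + 3*ν*t - ν + 1) / (2 * (ν*t+1)^3) := by
  subst h2 h3
  field_simp
  subst h1
  ring

/-- For `n ≥ 1` and `f(z) = z·e^{z^n}`, the Chebyshev's method applied to `f` is the
rational map `C_n(z) = n·z^{n+1}·(2n²z^{2n} + 3nz^n - n + 1)/(2(nz^n + 1)³)`. -/
theorem chebyshev_z_exp_pow (n : ℕ) (hn : 1 ≤ n) :
    ∀ z : ℂ, (n:ℂ)*z^n + 1 ≠ 0 →
      chebyshev (fun w => w * Complex.exp (w^n)) z =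
        (n:ℂ) * z^(n+1) * (2*(n:ℂ)^2*z^(2*n) + 3*(n:ℂ)*z^n - (n:ℂ) + 1) /
          (2 * ((n:ℂ)*z^n + 1)^3) := by
  intro z hz
  have he : Complex.exp (z^n) ≠ 0 := Complex.exp_ne_zero _
  rw [chebyshev, deriv1 n hn, (hd2 n z).deriv]
  have h1 : z^n = z^(n-1) * z := by
    conv_lhs => rw [← Nat.succ_pred_eq_of_pos hn]
    rw [pow_succ]; rfl
  have h2 : z^(n+1) = z * z^n := by rw [pow_succ]; ring
  have h3 : z^(2*n) = (z^n)^2 := by rw [mul_comm 2 n, pow_mul]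
  exact alg (n:ℂ) z (z^(n-1)) (z^n) (z^(n+1)) (z^(2*n)) (Complex.exp (z^n)) he hz h1 h2 h3
end

section
/- For n ≥ 2, the cubic polynomial F(w) = 2n³w³ + n²(3n+5)w² + n(2n²+3n+4)w - (n²-1) has exactly one real root r, and r lies in the open interval (0,1); the other two roots are non-real complex conjugates. -/
/-- For `n ≥ 2`, the cubic `F(w) = 2n³w³ + n²(3n+5)w² + n(2n²+3n+4)w - (n²-1)` has
exactly one real root `r`, with `r ∈ (0,1)`, and its other two roots are non-real
complex conjugates of each other. -/
theorem critical_cubic_roots (n : ℕ) (hn : 2 ≤ n) :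
    ∃ r : ℝ, 0 < r ∧ r < 1 ∧
      ∃ c : ℂ, c.im ≠ 0 ∧
        ∀ z : ℂ, 2*(n:ℂ)^3*z^3 + (n:ℂ)^2*(3*(n:ℂ)+5)*z^2 +
            (n:ℂ)*(2*(n:ℂ)^2+3*(n:ℂ)+4)*z - ((n:ℂ)^2 - 1) = 0 ↔
          (z = (r:ℂ) ∨ z = c ∨ z = (starRingEnd ℂ) c) := by
  have hN : (2:ℝ) ≤ (n:ℝ) := by exact_mod_cast hn
  set N : ℝ := (n:ℝ) with hNdef
  have hN0 : (0:ℝ) < N := by linarith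
  -- the real cubic
  set f : ℝ → ℝ := fun w => 2*N^3*w^3 + N^2*(3*N+5)*w^2 + N*(2*N^2+3*N+4)*w - (N^2-1) with hf
  have hcont : ContinuousOn f (Set.Icc (0:ℝ) 1) := by fun_prop
  have hmem : (0:ℝ) ∈ Set.Ioo (f 0) (f 1) := by
    constructor
    · simp only [hf]; nlinarith
    · simp only [hf]; nlinarith
  obtain ⟨r, hrmem, hfr⟩ := intermediate_value_Ioo (by norm_num : (0:ℝ) ≤ 1) hcont hmem
  obtain ⟨hr0, hr1⟩ := hrmem
  have hfr' : 2*N^3*r^3 + N^2*(3*N+5)*r^2 + N*(2*N^2+3*N+4)*r - (N^2-1) = 0 := hfr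
  -- quadratic factor 2N³z² + Bz + C
  set B : ℝ := N^2*(3*N+5) + 2*N^3*r with hB
  set C : ℝ := N*(2*N^2+3*N+4) + N^2*(3*N+5)*r + 2*N^3*r^2 with hC
  set Δ : ℝ := 8*N^3*C - B^2 with hΔdef
  have hΔ : 0 < Δ := by
    have : Δ = N^4*(7*N^2-6*N+7) + 4*N^5*(3*N+5)*r + 12*N^6*r^2 := by
      simp only [hΔdef, hB, hC]; ring
    rw [this]
    have h1 : 0 < 7*N^2-6*N+7 := by nlinarith
    nlinarith [mul_pos (pow_pos hN0 4) h1,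
      mul_pos (mul_pos (pow_pos hN0 5) (by linarith : (0:ℝ) < 3*N+5)) hr0,
      mul_pos (pow_pos hN0 6) (mul_pos hr0 hr0)]
  set s : ℝ := Real.sqrt Δ with hs
  have hs2 : s^2 = Δ := Real.sq_sqrt hΔ.le
  have hspos : 0 < s := Real.sqrt_pos.mpr hΔ
  set c : ℂ := ((-B/(4*N^3) : ℝ) : ℂ) + ((s/(4*N^3) : ℝ) : ℂ) * Complex.I with hc
  have hcim : c.im ≠ 0 := by
    simp only [hc, Complex.add_im, Complex.ofReal_im, Complex.mul_im, Complex.I_im,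
      Complex.I_re, Complex.ofReal_re, mul_one, mul_zero, zero_add, add_zero]
    positivity
  have hconj : (starRingEnd ℂ) c = ((-B/(4*N^3) : ℝ) : ℂ) - ((s/(4*N^3) : ℝ) : ℂ) * Complex.I := by
    rw [hc, map_add, map_mul, Complex.conj_ofReal, Complex.conj_ofReal, Complex.conj_I]
    ring
  have hN0c : (N:ℂ) ≠ 0 := by exact_mod_cast hN0.ne'
  have hI : (Complex.I)^2 = -1 := Complex.I_sq
  have hs2c : ((s:ℝ):ℂ)^2 = (Δ:ℝ) := by exact_mod_cast congrArg (Complex.ofReal) hs2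
  have hsum : 2*(N:ℂ)^3 * (c + (starRingEnd ℂ) c) = -(B:ℂ) := by
    rw [hconj, hc]
    push_cast
    field_simp
    ring
  have hmul : 2*(N:ℂ)^3 * (c * (starRingEnd ℂ) c) = (C:ℂ) := by
    rw [hconj, hc]
    have hΔc : ((s:ℝ):ℂ)^2 = 8*(N:ℂ)^3*(C:ℂ) - (B:ℂ)^2 := by
      rw [hs2c]; push_cast [hΔdef]; ring
    have hprod : ∀ x y : ℂ, (x + y*Complex.I) * (x - y*Complex.I) = x^2 + y^2 := by
      intro x y; linear_combination (-(y^2)) * hI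
    push_cast
    rw [hprod]
    field_simp
    linear_combination (norm := ring_nf) (2:ℂ) * hΔc
  refine ⟨r, hr0, hr1, c, hcim, fun z => ?_⟩
  have hquad : 2*(N:ℂ)^3 * (z - c) * (z - (starRingEnd ℂ) c)
      = 2*(N:ℂ)^3*z^2 + (B:ℂ)*z + (C:ℂ) := by
    linear_combination (-z) * hsum + hmul
  have hfrC : 2*(N:ℂ)^3*(r:ℂ)^3 + (N:ℂ)^2*(3*(N:ℂ)+5)*(r:ℂ)^2
      + (N:ℂ)*(2*(N:ℂ)^2+3*(N:ℂ)+4)*(r:ℂ) - ((N:ℂ)^2-1) = 0 := by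
    exact_mod_cast congrArg (Complex.ofReal) hfr'
  have key : 2*(n:ℂ)^3*z^3 + (n:ℂ)^2*(3*(n:ℂ)+5)*z^2 +
      (n:ℂ)*(2*(n:ℂ)^2+3*(n:ℂ)+4)*z - ((n:ℂ)^2 - 1)
      = (2*(N:ℂ)^3) * (z - (r:ℂ)) * (z - c) * (z - (starRingEnd ℂ) c) := by
    have hNn : ((n:ℕ):ℂ) = (N:ℂ) := by norm_cast
    rw [hNn]
    have expand : (2*(N:ℂ)^3) * (z - (r:ℂ)) * (z - c) * (z - (starRingEnd ℂ) c)
        = (z - (r:ℂ)) * (2*(N:ℂ)^3*z^2 + (B:ℂ)*z + (C:ℂ)) := by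
      rw [← hquad]; ring
    rw [expand]
    have hBc : (B:ℂ) = (N:ℂ)^2*(3*(N:ℂ)+5) + 2*(N:ℂ)^3*(r:ℂ) := by push_cast [hB]; ring
    have hCc : (C:ℂ) = (N:ℂ)*(2*(N:ℂ)^2+3*(N:ℂ)+4) + (N:ℂ)^2*(3*(N:ℂ)+5)*(r:ℂ) + 2*(N:ℂ)^3*(r:ℂ)^2 := by
      push_cast [hC]; ring
    rw [hBc, hCc]
    linear_combination hfrC
  rw [key]
  constructor
  · intro h
    rcases mul_eq_zero.mp h with h | h
    · rcases mul_eq_zero.mp h with h | h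
      · rcases mul_eq_zero.mp h with h | h
        · exact absurd h (mul_ne_zero two_ne_zero (pow_ne_zero 3 hN0c))
        · exact Or.inl (sub_eq_zero.mp h)
      · exact Or.inr (Or.inl (sub_eq_zero.mp h))
    · exact Or.inr (Or.inr (sub_eq_zero.mp h))
  · rintro (rfl | rfl | rfl) <;> ring
end
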